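/- arXiv:1901.04591 — 2 statements merged into one kernel-verified Lean document; each statement's English description precedes it below -/
import Mathlib

section
/- Let n ≥ 1 and let w be a permutation of {1,…,n}, acting on ℝ^n by w·e_i = e_{w(i)}. Let Γ = {e_i − e_j : 1 ≤ i, j ≤ n, i ≠ j}. Call a subset Γ′ ⊆ Γ a parabolic root subsystem if Γ′ = Γ ∩ span_ℝ(Γ′), and for a partition λ of {1,…,n} set Γ_λ = {e_i − e_j ∈ Γ : i and j lie in the same block of λ}. Then the map λ ↦ Γ_λ is a bijection from the set of w-stable partitions of {1,…,n} onto the set of w-stable parabolic root subsystems of Γ. -/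
noncomputable section

/-- The standard basis vector `e i` of `ℝ^n`. -/
def stdVec (n : ℕ) (i : Fin n) : Fin n → ℝ := Pi.single i 1

/-- The coordinate-permutation action of `w` on `ℝ^n`, satisfying `w · e i = e (w i)`. -/
def permAct {n : ℕ} (w : Equiv.Perm (Fin n)) (x : Fin n → ℝ) : Fin n → ℝ :=
  fun j => x (w⁻¹ j)

/-- `P` is a partition of `{1,…,n}`: pairwise disjoint nonempty blocks covering everything. -/
def IsPartition {n : ℕ} (P : Set (Set (Fin n))) : Prop :=
  (∀ B ∈ P, B.Nonempty) ∧ (∀ B ∈ P, ∀ C ∈ P, B ≠ C → Disjoint B C) ∧ ⋃₀ P = Set.univ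

/-- `P` is a `w`-stable partition: `w` maps every block onto a block. -/
def IsWStablePartition {n : ℕ} (w : Equiv.Perm (Fin n)) (P : Set (Set (Fin n))) : Prop :=
  IsPartition P ∧ ∀ B ∈ P, (⇑w) '' B ∈ P

/-- The root system `Γ = {e i − e j : i ≠ j}` of type `A_{n-1}`. -/
def rootSet (n : ℕ) : Set (Fin n → ℝ) :=
  {x | ∃ i j : Fin n, i ≠ j ∧ x = stdVec n i - stdVec n j}

/-- A parabolic root subsystem: `Γ' ⊆ Γ` with `Γ' = Γ ∩ span_ℝ Γ'`. -/
def IsParabolicSubsystem {n : ℕ} (Γ' : Set (Fin n → ℝ)) : Prop :=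
  Γ' ⊆ rootSet n ∧ Γ' = rootSet n ∩ (Submodule.span ℝ Γ' : Set (Fin n → ℝ))

/-- A set of vectors is `w`-stable if it is invariant under the coordinate permutation action. -/
def IsWStableSet {n : ℕ} (w : Equiv.Perm (Fin n)) (X : Set (Fin n → ℝ)) : Prop :=
  ∀ x ∈ X, permAct w x ∈ X

/-- The parabolic root subsystem `Γ_λ` attached to a partition `λ`:
roots `e i − e j` with `i, j` in the same block. -/
def rootsOfPartition {n : ℕ} (P : Set (Set (Fin n))) : Set (Fin n → ℝ) :=
  {x | ∃ i j : Fin n, i ≠ j ∧ (∃ B ∈ P, i ∈ B ∧ j ∈ B) ∧ x = stdVec n i - stdVec n j}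

namespace Aux0
variable {n : ℕ}

lemma stdVec_apply (i j : Fin n) : stdVec n i j = if j = i then 1 else 0 := by
  simp [stdVec, Pi.single_apply]

lemma stdVec_sub_inj {i j k l : Fin n} (hij : i ≠ j) (hkl : k ≠ l)
    (h : stdVec n i - stdVec n j = stdVec n k - stdVec n l) : i = k ∧ j = l := by
  have hi := congrFun h i
  have hj := congrFun h j
  simp only [Pi.sub_apply, stdVec_apply] at hi hj
  split_ifs at hi hj <;> simp_all <;> norm_num at *

lemma permAct_stdVec (w : Equiv.Perm (Fin n)) (i : Fin n) :
    permAct w (stdVec n i) = stdVec n (w i) := by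
  funext j
  simp only [permAct, stdVec_apply]
  congr 1
  simp [Equiv.Perm.inv_def, Equiv.eq_symm_apply, eq_comm]

lemma permAct_sub (w : Equiv.Perm (Fin n)) (x y : Fin n → ℝ) :
    permAct w (x - y) = permAct w x - permAct w y := rfl

lemma permAct_injective (w : Equiv.Perm (Fin n)) : Function.Injective (permAct (n := n) w) := by
  intro x y h
  funext j
  have := congrFun h (w j)
  simpa [permAct] using this

open Classical in
def blockSum (B : Set (Fin n)) : (Fin n → ℝ) →ₗ[ℝ] ℝ :=
  ∑ i ∈ Finset.univ.filter (fun i => i ∈ B), LinearMap.proj i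

open Classical in
lemma blockSum_stdVec (B : Set (Fin n)) (i : Fin n) :
    blockSum B (stdVec n i) = if i ∈ B then 1 else 0 := by
  simp [blockSum, stdVec, LinearMap.proj_apply, Pi.single_apply,
    Finset.sum_ite_eq', Finset.mem_filter]

lemma rootSet_finite : (rootSet n).Finite := by
  have : rootSet n ⊆ Set.range (fun p : Fin n × Fin n => stdVec n p.1 - stdVec n p.2) := by
    rintro x ⟨i, j, -, rfl⟩; exact ⟨(i, j), rfl⟩
  exact (Set.finite_range _).subset this

/-! ### Same-block relation for partitions -/

def sb (P : Set (Set (Fin n))) (i j : Fin n) : Prop := ∃ B ∈ P, i ∈ B ∧ j ∈ B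

lemma exists_block (hP : IsPartition P) (i : Fin n) : ∃ B ∈ P, i ∈ B := by
  have : i ∈ ⋃₀ P := hP.2.2 ▸ Set.mem_univ i
  obtain ⟨B, hB, hiB⟩ := this
  exact ⟨B, hB, hiB⟩

lemma block_eq_class {P : Set (Set (Fin n))} (hP : IsPartition P) {B : Set (Fin n)}
    (hB : B ∈ P) {i : Fin n} (hi : i ∈ B) : B = {j | sb P i j} := by
  ext j
  constructor
  · intro hj; exact ⟨B, hB, hi, hj⟩
  · rintro ⟨C, hC, hiC, hjC⟩
    rcases eq_or_ne B C with rfl | hne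
    · exact hjC
    · exact absurd (hP.2.1 B hB C hC hne) (by
        rw [Set.not_disjoint_iff]; exact ⟨i, hi, hiC⟩)

lemma mem_roots_iff {P : Set (Set (Fin n))} {i j : Fin n} (hij : i ≠ j) :
    stdVec n i - stdVec n j ∈ rootsOfPartition P ↔ sb P i j := by
  constructor
  · rintro ⟨k, l, hkl, hsb, hx⟩
    obtain ⟨hik, hjl⟩ := stdVec_sub_inj hkl hij hx.symm
    subst hik; subst hjl; exact hsb
  · intro h; exact ⟨i, j, hij, h, rfl⟩

lemma roots_subset (P : Set (Set (Fin n))) : rootsOfPartition P ⊆ rootSet n := by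
  rintro x ⟨i, j, hij, -, rfl⟩; exact ⟨i, j, hij, rfl⟩

lemma blockSum_span_zero {P : Set (Set (Fin n))} (hP : IsPartition P) {B : Set (Fin n)}
    (hB : B ∈ P) {x : Fin n → ℝ} (hx : x ∈ Submodule.span ℝ (rootsOfPartition P)) :
    blockSum B x = 0 := by
  have hle : Submodule.span ℝ (rootsOfPartition P) ≤ LinearMap.ker (blockSum B) := by
    rw [Submodule.span_le]
    rintro y ⟨i, j, hij, ⟨C, hC, hiC, hjC⟩, rfl⟩
    simp only [SetLike.mem_coe, LinearMap.mem_ker, map_sub, blockSum_stdVec]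
    rcases eq_or_ne B C with rfl | hne
    · simp [hiC, hjC]
    · have hd := hP.2.1 B hB C hC hne
      have hiB : i ∉ B := fun h => (Set.disjoint_left.mp hd h) hiC
      have hjB : j ∉ B := fun h => (Set.disjoint_left.mp hd h) hjC
      simp [hiB, hjB]
  exact hle hx

lemma parabolic_of_partition {P : Set (Set (Fin n))} (hP : IsPartition P) :
    IsParabolicSubsystem (rootsOfPartition P) := by
  refine ⟨roots_subset P, le_antisymm ?_ ?_⟩
  · intro x hx
    exact ⟨roots_subset P hx, Submodule.subset_span hx⟩
  · rintro x ⟨⟨i, j, hij, rfl⟩, hspan⟩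
    obtain ⟨B, hB, hiB⟩ := exists_block hP i
    rw [mem_roots_iff hij]
    refine ⟨B, hB, hiB, ?_⟩
    by_contra hjB
    have h0 := blockSum_span_zero hP hB hspan
    rw [map_sub, blockSum_stdVec, blockSum_stdVec] at h0
    simp [hiB, hjB] at h0

lemma roots_wstable {w : Equiv.Perm (Fin n)} {P : Set (Set (Fin n))}
    (hP : IsWStablePartition w P) : IsWStableSet w (rootsOfPartition P) := by
  rintro x ⟨i, j, hij, ⟨B, hB, hiB, hjB⟩, rfl⟩
  refine ⟨w i, w j, fun h => hij (w.injective h), ⟨(⇑w) '' B, hP.2 B hB,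
    ⟨i, hiB, rfl⟩, ⟨j, hjB, rfl⟩⟩, ?_⟩
  rw [permAct_sub, permAct_stdVec, permAct_stdVec]

/-! ### From a parabolic subsystem to a partition -/

def rel (Γ' : Set (Fin n → ℝ)) (i j : Fin n) : Prop :=
  i = j ∨ stdVec n i - stdVec n j ∈ Γ'

lemma rel_refl (Γ' : Set (Fin n → ℝ)) (i : Fin n) : rel Γ' i i := Or.inl rfl

lemma rel_symm {Γ' : Set (Fin n → ℝ)} (hpar : IsParabolicSubsystem Γ') {i j : Fin n}
    (h : rel Γ' i j) : rel Γ' j i := by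
  rcases h with rfl | hx
  · exact Or.inl rfl
  · rcases eq_or_ne i j with rfl | hne
    · exact Or.inl rfl
    · right
      rw [hpar.2]
      refine ⟨⟨j, i, hne.symm, rfl⟩, ?_⟩
      have : stdVec n j - stdVec n i = -(stdVec n i - stdVec n j) := by abel
      rw [this]
      exact neg_mem (Submodule.subset_span hx)

lemma rel_trans {Γ' : Set (Fin n → ℝ)} (hpar : IsParabolicSubsystem Γ') {i j k : Fin n}
    (h1 : rel Γ' i j) (h2 : rel Γ' j k) : rel Γ' i k := by
  rcases h1 with rfl | hx
  · exact h2
  · rcases h2 with rfl | hy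
    · exact Or.inr hx
    · rcases eq_or_ne i k with rfl | hne
      · exact Or.inl rfl
      · right
        rw [hpar.2]
        refine ⟨⟨i, k, hne, rfl⟩, ?_⟩
        have : stdVec n i - stdVec n k =
            (stdVec n i - stdVec n j) + (stdVec n j - stdVec n k) := by abel
        rw [this]
        exact add_mem (Submodule.subset_span hx) (Submodule.subset_span hy)

def classOf (Γ' : Set (Fin n → ℝ)) (i : Fin n) : Set (Fin n) := {j | rel Γ' i j}

lemma classOf_eq {Γ' : Set (Fin n → ℝ)} (hpar : IsParabolicSubsystem Γ') {i j : Fin n}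
    (h : rel Γ' i j) : classOf Γ' i = classOf Γ' j := by
  ext k
  exact ⟨fun hk => rel_trans hpar (rel_symm hpar h) hk, fun hk => rel_trans hpar h hk⟩

def partOf (Γ' : Set (Fin n → ℝ)) : Set (Set (Fin n)) := Set.range (classOf Γ')

lemma partOf_isPartition {Γ' : Set (Fin n → ℝ)} (hpar : IsParabolicSubsystem Γ') :
    IsPartition (partOf Γ') := by
  refine ⟨?_, ?_, ?_⟩
  · rintro B ⟨i, rfl⟩; exact ⟨i, rel_refl Γ' i⟩
  · rintro B ⟨i, rfl⟩ C ⟨j, rfl⟩ hne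
    rw [Set.disjoint_left]
    intro k hki hkj
    exact hne (by rw [classOf_eq hpar hki, classOf_eq hpar hkj])
  · ext i
    simp only [Set.mem_sUnion, Set.mem_univ, iff_true]
    exact ⟨classOf Γ' i, ⟨i, rfl⟩, rel_refl Γ' i⟩

lemma wstable_rev {w : Equiv.Perm (Fin n)} {Γ' : Set (Fin n → ℝ)}
    (hsub : Γ' ⊆ rootSet n) (hws : IsWStableSet w Γ') {x : Fin n → ℝ}
    (hx : permAct w x ∈ Γ') (hxr : x ∈ rootSet n) : x ∈ Γ' := by
  have hfin : Γ'.Finite := rootSet_finite.subset hsub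
  have hmaps : Set.MapsTo (permAct w) Γ' Γ' := hws
  have hinj : Set.InjOn (permAct w) Γ' := (permAct_injective w).injOn
  have hbij := (Set.Finite.injOn_iff_bijOn_of_mapsTo hfin hmaps).mp hinj
  obtain ⟨y, hy, hyx⟩ := hbij.surjOn hx
  rwa [permAct_injective w hyx] at hy

lemma rel_w {w : Equiv.Perm (Fin n)} {Γ' : Set (Fin n → ℝ)}
    (hsub : Γ' ⊆ rootSet n) (hws : IsWStableSet w Γ') {i j : Fin n} :
    rel Γ' i j ↔ rel Γ' (w i) (w j) := by
  have key : ∀ i j : Fin n, stdVec n i - stdVec n j ∈ Γ' →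
      stdVec n (w i) - stdVec n (w j) ∈ Γ' := by
    intro i j h
    have := hws _ h
    rwa [permAct_sub, permAct_stdVec, permAct_stdVec] at this
  constructor
  · rintro (rfl | h)
    · exact Or.inl rfl
    · exact Or.inr (key i j h)
  · rintro (h | h)
    · exact Or.inl (w.injective h)
    · rcases eq_or_ne i j with rfl | hne
      · exact Or.inl rfl
      · refine Or.inr (wstable_rev hsub hws ?_ ⟨i, j, hne, rfl⟩)
        rwa [permAct_sub, permAct_stdVec, permAct_stdVec]

lemma partOf_wstable {w : Equiv.Perm (Fin n)} {Γ' : Set (Fin n → ℝ)}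
    (hpar : IsParabolicSubsystem Γ') (hws : IsWStableSet w Γ') :
    IsWStablePartition w (partOf Γ') := by
  refine ⟨partOf_isPartition hpar, ?_⟩
  rintro B ⟨i, rfl⟩
  have himg : (⇑w) '' classOf Γ' i = classOf Γ' (w i) := by
    ext j
    simp only [Set.mem_image, classOf, Set.mem_setOf_eq]
    constructor
    · rintro ⟨k, hk, rfl⟩
      exact (rel_w hpar.1 hws).mp hk
    · intro hj
      refine ⟨w⁻¹ j, ?_, by simp⟩
      apply (rel_w hpar.1 hws).mpr
      simpa using hj
  exact ⟨w i, himg.symm⟩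

lemma roots_partOf {Γ' : Set (Fin n → ℝ)} (hpar : IsParabolicSubsystem Γ') :
    rootsOfPartition (partOf Γ') = Γ' := by
  ext x
  constructor
  · rintro ⟨i, j, hij, ⟨B, ⟨k, rfl⟩, hik, hjk⟩, rfl⟩
    have : rel Γ' i j := rel_trans hpar (rel_symm hpar hik) hjk
    rcases this with rfl | h
    · exact absurd rfl hij
    · exact h
  · intro hx
    obtain ⟨i, j, hij, rfl⟩ := hpar.1 hx
    exact ⟨i, j, hij, ⟨classOf Γ' i, ⟨i, rfl⟩, rel_refl Γ' i, Or.inr hx⟩, rfl⟩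

/-! ### Injectivity -/

lemma partition_subset_of_roots_eq {P Q : Set (Set (Fin n))} (hP : IsPartition P)
    (hQ : IsPartition Q) (h : rootsOfPartition P = rootsOfPartition Q) : P ⊆ Q := by
  intro B hB
  obtain ⟨i, hiB⟩ := hP.1 B hB
  obtain ⟨C, hC, hiC⟩ := exists_block hQ i
  have hBC : B = C := by
    rw [block_eq_class hP hB hiB, block_eq_class hQ hC hiC]
    ext j
    rcases eq_or_ne i j with rfl | hij
    · simp only [Set.mem_setOf_eq]
      exact ⟨fun _ => ⟨C, hC, hiC, hiC⟩, fun _ => ⟨B, hB, hiB, hiB⟩⟩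
    · simp only [Set.mem_setOf_eq]
      rw [← mem_roots_iff (P := P) hij, ← mem_roots_iff (P := Q) hij, h]
  rw [hBC]; exact hC

end Aux0


open Aux0 in
/-- `λ ↦ Γ_λ` is a bijection from the set of `w`-stable partitions of
`{1,…,n}` onto the set of `w`-stable parabolic root subsystems of `Γ`. -/
theorem partition_bij_parabolic (n : ℕ) (hn : 1 ≤ n) (w : Equiv.Perm (Fin n)) :
    Set.BijOn (rootsOfPartition (n := n))
      {P | IsWStablePartition w P}
      {Γ' | IsParabolicSubsystem Γ' ∧ IsWStableSet w Γ'} := by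
  refine ⟨?_, ?_, ?_⟩
  · intro P hP
    exact ⟨parabolic_of_partition hP.1, roots_wstable hP⟩
  · intro P hP Q hQ h
    exact Set.Subset.antisymm (partition_subset_of_roots_eq hP.1 hQ.1 h)
      (partition_subset_of_roots_eq hQ.1 hP.1 h.symm)
  · rintro Γ' ⟨hpar, hws⟩
    exact ⟨partOf Γ', partOf_wstable hpar hws, roots_partOf hpar⟩
end
end

section
/- Let n ≥ 1, d₀ ≥ 1, a = ⌊n/d₀⌋, and let w be a permutation of {1,…,n} that is a product of a pairwise disjoint d₀-cycles; let w act on ℂ^n by w·e_i = e_{w(i)}. Let ζ ∈ ℂ be a primitive d₀-th root of unity, 𝒱 = {x ∈ ℂ^n : x_1 + ⋯ + x_n = 0}, and 𝒱(w,ζ) = {x ∈ 𝒱 : w·x = ζx}. Let Γ = {e_i − e_j : i ≠ j} and, for a w-stable partition λ of {1,…,n}, let Γ_λ = {e_i − e_j ∈ Γ : i and j lie in the same block of λ}; orthogonal complements (−)^⊥ are taken in ℂ^n with respect to the standard inner product. Then the following are equivalent: (i) (𝒱(w,ζ) ∩ Γ_λ^⊥)^⊥ ∩ Γ = Γ_λ;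 (ii) w permutes the blocks of λ with at most one fixed block, and every other ⟨w⟩-orbit of blocks has length d₀. -/
noncomputable section

/-- The standard basis vector `e i` of `ℂ^n`. -/
def stdVecC (n : ℕ) (i : Fin n) : Fin n → ℂ := Pi.single i 1

/-- The coordinate-permutation action of `w` on `ℂ^n`, satisfying `w · e i = e (w i)`. -/
def permActC {n : ℕ} (w : Equiv.Perm (Fin n)) (x : Fin n → ℂ) : Fin n → ℂ :=
  fun j => x (w⁻¹ j)

/-- The root system `Γ = {e i − e j : i ≠ j}`. -/
def rootSetC (n : ℕ) : Set (Fin n → ℂ) :=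
  {x | ∃ i j : Fin n, i ≠ j ∧ x = stdVecC n i - stdVecC n j}

/-- The set `Γ_λ` of roots `e i − e j` with `i, j` in one block of the partition `P`. -/
def rootsOfPartitionC {n : ℕ} (P : Set (Set (Fin n))) : Set (Fin n → ℂ) :=
  {x | ∃ i j : Fin n, i ≠ j ∧ (∃ B ∈ P, i ∈ B ∧ j ∈ B) ∧ x = stdVecC n i - stdVecC n j}

/-- The standard inner product on `ℂ^n`. -/
def stdInner {n : ℕ} (y x : Fin n → ℂ) : ℂ := ∑ i, (starRingEnd ℂ) (y i) * x i

/-- Orthogonal complement in `ℂ^n` with respect to the standard inner product. -/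
def perp {n : ℕ} (X : Set (Fin n → ℂ)) : Set (Fin n → ℂ) :=
  {y | ∀ x ∈ X, stdInner y x = 0}

/-- The hyperplane `𝒱 = {x : x₁ + ⋯ + xₙ = 0}` (the ℂ-span of `Γ`). -/
def sumZero (n : ℕ) : Set (Fin n → ℂ) := {x | ∑ i, x i = 0}

/-- The `ζ`-eigenspace `𝒱(w,ζ)` of `w` on `𝒱`. -/
def eigSpace {n : ℕ} (w : Equiv.Perm (Fin n)) (ζ : ℂ) : Set (Fin n → ℂ) :=
  {x ∈ sumZero n | permActC w x = ζ • x}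

/-- The `⟨w⟩`-orbit of a block `B`. -/
def blockOrbit {n : ℕ} (w : Equiv.Perm (Fin n)) (B : Set (Fin n)) : Set (Set (Fin n)) :=
  {C | ∃ k : ℕ, C = (⇑(w ^ k)) '' B}

namespace EigenAux

variable {n : ℕ}

lemma stdInner_root_right (x : Fin n → ℂ) (i j : Fin n) :
    stdInner x (stdVecC n i - stdVecC n j)
      = (starRingEnd ℂ) (x i) - (starRingEnd ℂ) (x j) := by
  simp [stdInner, stdVecC, Pi.single_apply, mul_sub, mul_ite,
    Finset.sum_sub_distrib]

lemma stdInner_root_left (x : Fin n → ℂ) (i j : Fin n) :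
    stdInner (stdVecC n i - stdVecC n j) x = x i - x j := by
  have h : ∀ p : Fin n, (starRingEnd ℂ) ((stdVecC n i - stdVecC n j) p) * x p
      = (if p = i then x p else 0) - (if p = j then x p else 0) := by
    intro p
    simp [stdVecC, Pi.single_apply]
    split_ifs <;> ring
  rw [stdInner]
  simp only [h, Finset.sum_sub_distrib, Finset.sum_ite_eq', Finset.mem_univ, if_true]

lemma root_eq {i j k l : Fin n} (hij : i ≠ j) (hkl : k ≠ l)
    (h : stdVecC n i - stdVecC n j = stdVecC n k - stdVecC n l) : i = k ∧ j = l := by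
  have hi := congr_fun h i
  have hj := congr_fun h j
  simp [stdVecC, Pi.single_apply, hij, hij.symm] at hi hj
  constructor
  · split_ifs at hi <;> first | assumption | norm_num at hi
  · split_ifs at hj <;> first | assumption | norm_num at hj

lemma block_eq {P : Set (Set (Fin n))} (hP : IsPartition P) {B C : Set (Fin n)}
    (hB : B ∈ P) (hC : C ∈ P) {p : Fin n} (hpB : p ∈ B) (hpC : p ∈ C) : B = C := by
  by_contra h
  exact Set.disjoint_left.mp (hP.2.1 B hB C hC h) hpB hpC

lemma exists_block {P : Set (Set (Fin n))} (hP : IsPartition P) (p : Fin n) :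
    ∃ B ∈ P, p ∈ B := by
  have h : p ∈ ⋃₀ P := by rw [hP.2.2]; trivial
  simpa using h

lemma mem_S_iff {w : Equiv.Perm (Fin n)} {ζ : ℂ} {P : Set (Set (Fin n))} {x : Fin n → ℂ} :
    x ∈ eigSpace w ζ ∩ perp (rootsOfPartitionC P) ↔
      (∑ i, x i = 0) ∧ (∀ p, x p = ζ * x (w p)) ∧
      (∀ B ∈ P, ∀ p ∈ B, ∀ q ∈ B, x p = x q) := by
  constructor
  · rintro ⟨⟨hsum, heig⟩, hperp⟩
    refine ⟨hsum, ?_, ?_⟩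
    · intro p
      have h := congr_fun heig (w p)
      simpa [permActC] using h
    · intro B hB p hp q hq
      by_cases hpq : p = q
      · rw [hpq]
      · have h := hperp _ ⟨p, q, hpq, ⟨B, hB, hp, hq⟩, rfl⟩
        rw [stdInner_root_right] at h
        exact (starRingEnd ℂ).injective (sub_eq_zero.mp h)
  · rintro ⟨hsum, heig, hconst⟩
    refine ⟨⟨hsum, ?_⟩, ?_⟩
    · funext j
      have h := heig (w⁻¹ j)
      simpa [permActC] using h
    · rintro r ⟨i, j, hij, ⟨B, hB, hiB, hjB⟩, rfl⟩
      rw [stdInner_root_right, hconst B hB i hiB j hjB, sub_self]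

lemma iterate_eig {w : Equiv.Perm (Fin n)} {ζ : ℂ} {x : Fin n → ℂ}
    (heig : ∀ p, x p = ζ * x (w p)) : ∀ (m : ℕ) (p : Fin n),
      x p = ζ ^ m * x ((w ^ m) p) := by
  intro m
  induction m with
  | zero => simp
  | succ m ih =>
    intro p
    have h1 : (w ^ (m + 1)) p = (w ^ m) (w p) := by rw [pow_succ]; rfl
    calc x p = ζ * x (w p) := heig p
      _ = ζ * (ζ ^ m * x ((w ^ m) (w p))) := by rw [ih (w p)]
      _ = ζ ^ (m + 1) * x ((w ^ (m + 1)) p) := by rw [h1]; ring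

lemma vanish {w : Equiv.Perm (Fin n)} {ζ : ℂ} {P : Set (Set (Fin n))} {d₀ : ℕ}
    (hP : IsPartition P) (hζ : IsPrimitiveRoot ζ d₀) {x : Fin n → ℂ}
    (hx : x ∈ eigSpace w ζ ∩ perp (rootsOfPartitionC P))
    {B : Set (Fin n)} (hB : B ∈ P) {m : ℕ} (hm1 : 1 ≤ m) (hm2 : m < d₀)
    (hBm : (⇑(w ^ m)) '' B = B) {p : Fin n} (hp : p ∈ B) : x p = 0 := by
  obtain ⟨hsum, heig, hconst⟩ := mem_S_iff.mp hx
  have h1 : x p = ζ ^ m * x ((w ^ m) p) := iterate_eig heig m p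
  have h2 : (w ^ m) p ∈ B := by rw [← hBm]; exact ⟨p, hp, rfl⟩
  have h3 : x ((w ^ m) p) = x p := hconst B hB _ h2 _ hp
  rw [h3] at h1
  have h4 : ζ ^ m ≠ 1 := hζ.pow_ne_one_of_pos_of_lt (by omega) hm2
  by_contra h
  exact h4 ((mul_right_cancel₀ h (by rw [one_mul, ← h1])).symm)

lemma pow_image_mem {w : Equiv.Perm (Fin n)} {P : Set (Set (Fin n))}
    (hP : IsWStablePartition w P) {B : Set (Fin n)} (hB : B ∈ P) (k : ℕ) :
    (⇑(w ^ k)) '' B ∈ P := by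
  induction k with
  | zero => simpa using hB
  | succ k ih =>
    have h : (⇑(w ^ (k + 1))) '' B = ⇑w '' ((⇑(w ^ k)) '' B) := by
      rw [← Set.image_comp, ← Equiv.Perm.coe_mul, ← pow_succ']
    rw [h]
    exact hP.2 _ ih

lemma blockOrbit_eq [DecidableEq (Set (Fin n))] {w : Equiv.Perm (Fin n)} {d₀ : ℕ}
    (hd : 0 < d₀) (hord : w ^ d₀ = 1) (B : Set (Fin n)) :
    blockOrbit w B = ↑((Finset.range d₀).image fun k => (⇑(w ^ k)) '' B) := by
  ext C
  simp only [blockOrbit, Set.mem_setOf_eq, Finset.coe_image, Finset.coe_range,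
    Set.mem_image, Set.mem_Iio]
  constructor
  · rintro ⟨k, rfl⟩
    exact ⟨k % d₀, Nat.mod_lt _ hd, by rw [← pow_eq_pow_mod k hord]⟩
  · rintro ⟨k, _, rfl⟩
    exact ⟨k, rfl⟩

lemma injOn_of_ncard {w : Equiv.Perm (Fin n)} {d₀ : ℕ} (hd : 0 < d₀) (hord : w ^ d₀ = 1)
    {B : Set (Fin n)} (h : (blockOrbit w B).ncard = d₀) :
    Set.InjOn (fun k => (⇑(w ^ k)) '' B) ↑(Finset.range d₀) := by
  classical
  apply Finset.card_image_iff.mp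
  rw [Finset.card_range, ← Set.ncard_coe_finset, ← blockOrbit_eq hd hord B]
  exact h

lemma exists_short {w : Equiv.Perm (Fin n)} {d₀ : ℕ} (hd : 0 < d₀) (hord : w ^ d₀ = 1)
    {B : Set (Fin n)} (h : (blockOrbit w B).ncard ≠ d₀) :
    ∃ m, 1 ≤ m ∧ m < d₀ ∧ (⇑(w ^ m)) '' B = B := by
  classical
  have hnotinj : ¬ Set.InjOn (fun k => (⇑(w ^ k)) '' B) ↑(Finset.range d₀) := by
    intro hinj
    apply h
    rw [blockOrbit_eq hd hord B, Set.ncard_coe_finset, Finset.card_image_iff.mpr hinj,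
      Finset.card_range]
  rw [Set.InjOn] at hnotinj
  push_neg at hnotinj
  obtain ⟨k, hk, l, hl, heq, hne⟩ := hnotinj
  simp only [Finset.coe_range, Set.mem_Iio] at hk hl
  have main : ∀ k l : ℕ, k < l → l < d₀ → (⇑(w ^ k)) '' B = (⇑(w ^ l)) '' B →
      ∃ m, 1 ≤ m ∧ m < d₀ ∧ (⇑(w ^ m)) '' B = B := by
    intro k l hkl hld heq
    refine ⟨l - k, by omega, by omega, ?_⟩
    have h2 : (⇑(w ^ k)) '' ((⇑(w ^ (l - k))) '' B) = (⇑(w ^ k)) '' B := by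
      rw [← Set.image_comp, ← Equiv.Perm.coe_mul, ← pow_add,
        show k + (l - k) = l by omega]
      exact heq.symm
    exact Set.image_injective.mpr (Equiv.injective _) h2
  rcases Nat.lt_or_ge k l with hkl | hkl
  · exact main k l hkl hl heq
  · exact main l k (by omega) hk heq.symm

lemma construction {d₀ : ℕ} {w : Equiv.Perm (Fin n)} {ζ : ℂ} {P : Set (Set (Fin n))}
    (hP : IsWStablePartition w P) (hζ : IsPrimitiveRoot ζ d₀) (hd2 : 2 ≤ d₀)
    (hord : w ^ d₀ = 1)
    {B : Set (Fin n)} (hB : B ∈ P)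
    (hinj : Set.InjOn (fun k => (⇑(w ^ k)) '' B) ↑(Finset.range d₀))
    {i j : Fin n} (hiB : i ∈ B) {C : Set (Fin n)} (hC : C ∈ P) (hjC : j ∈ C)
    (hCB : C ≠ B) :
    ∃ x ∈ eigSpace w ζ ∩ perp (rootsOfPartitionC P), x i = 1 ∧ x j ≠ 1 := by
  classical
  have hζ0 : ζ ≠ 0 := hζ.ne_zero (by omega)
  set η : ℂ := ζ⁻¹ with hη
  have hηprim : IsPrimitiveRoot η d₀ := hζ.inv
  set x : Fin n → ℂ :=
    fun p => ∑ k ∈ Finset.range d₀, Set.indicator ((⇑(w ^ k)) '' B) (fun _ => η ^ k) p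
    with hxdef
  have hmemP : ∀ k : ℕ, (⇑(w ^ k)) '' B ∈ P := pow_image_mem hP hB
  -- value on orbit blocks
  have hval : ∀ k < d₀, ∀ p ∈ (⇑(w ^ k)) '' B, x p = η ^ k := by
    intro k hk p hp
    simp only [hxdef]
    rw [Finset.sum_eq_single_of_mem k (Finset.mem_range.mpr hk)]
    · exact Set.indicator_of_mem hp _
    · intro l hl hlk
      apply Set.indicator_of_notMem
      intro hpl
      apply hlk
      exact hinj (by simpa using Finset.mem_range.mp hl) (by simpa using hk)
        (block_eq hP.1 (hmemP l) (hmemP k) hpl hp)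
  have hval0 : ∀ p : Fin n, (∀ k < d₀, p ∉ (⇑(w ^ k)) '' B) → x p = 0 := by
    intro p hp
    simp only [hxdef]
    apply Finset.sum_eq_zero
    intro k hk
    exact Set.indicator_of_notMem (hp k (Finset.mem_range.mp hk)) _
  -- a block not in the orbit has all its points outside the orbit blocks
  have hnotorb : ∀ C' ∈ P, (¬ ∃ k < d₀, C' = (⇑(w ^ k)) '' B) →
      ∀ p ∈ C', ∀ k < d₀, p ∉ (⇑(w ^ k)) '' B := by
    intro C' hC' hno p hp k hk hpk
    exact hno ⟨k, hk, block_eq hP.1 hC' (hmemP k) hp hpk⟩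
  -- constancy on blocks
  have hconst : ∀ C' ∈ P, ∀ p ∈ C', ∀ q ∈ C', x p = x q := by
    intro C' hC' p hp q hq
    by_cases hcase : ∃ k < d₀, C' = (⇑(w ^ k)) '' B
    · obtain ⟨k, hk, rfl⟩ := hcase
      rw [hval k hk p hp, hval k hk q hq]
    · rw [hval0 p (hnotorb C' hC' hcase p hp), hval0 q (hnotorb C' hC' hcase q hq)]
  -- eigenvector property
  have heig : ∀ p : Fin n, x p = ζ * x (w p) := by
    intro p
    obtain ⟨C', hC', hp⟩ := exists_block hP.1 p
    by_cases hcase : ∃ k < d₀, C' = (⇑(w ^ k)) '' B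
    · obtain ⟨k, hk, hCk⟩ := hcase
      rw [hCk] at hp
      have hxp : x p = η ^ k := hval k hk p hp
      have hwp : w p ∈ (⇑(w ^ (k + 1))) '' B := by
        have : (⇑(w ^ (k + 1))) '' B = ⇑w '' ((⇑(w ^ k)) '' B) := by
          rw [← Set.image_comp, ← Equiv.Perm.coe_mul, ← pow_succ']
        rw [this]
        exact ⟨p, hp, rfl⟩
      rcases Nat.lt_or_ge (k + 1) d₀ with hk1 | hk1
      · rw [hxp, hval (k + 1) hk1 (w p) hwp]
        rw [pow_succ, hη]
        field_simp
      · have hkd : k + 1 = d₀ := by omega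
        have hwp0 : w p ∈ (⇑(w ^ 0)) '' B := by
          have hBd : (⇑(w ^ (k + 1))) '' B = (⇑(w ^ 0)) '' B := by rw [hkd, hord]; simp
          rw [← hBd]; exact hwp
        rw [hxp, hval 0 (by omega) (w p) hwp0, pow_zero, mul_one, hη, inv_pow]
        apply inv_eq_of_mul_eq_one_right
        rw [mul_comm, ← pow_succ', hkd]
        exact hζ.pow_eq_one
    · have hxp : x p = 0 := hval0 p (hnotorb C' hC' hcase p hp)
      have hwC' : ⇑w '' C' ∈ P := hP.2 _ hC'
      have hwpC' : w p ∈ ⇑w '' C' := ⟨p, hp, rfl⟩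
      have hno2 : ¬ ∃ k < d₀, ⇑w '' C' = (⇑(w ^ k)) '' B := by
        rintro ⟨k, hk, hkeq⟩
        apply hcase
        set k' : ℕ := if k = 0 then d₀ - 1 else k - 1 with hk'def
        have hk' : k' < d₀ := by rw [hk'def]; split <;> omega
        refine ⟨k', hk', ?_⟩
        have h3 : ⇑w '' ((⇑(w ^ k')) '' B) = (⇑(w ^ k)) '' B := by
          rw [← Set.image_comp, ← Equiv.Perm.coe_mul, ← pow_succ']
          by_cases hk0 : k = 0
          · have : k' + 1 = d₀ := by rw [hk'def]; simp [hk0]; omega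
            rw [this, hord, hk0, pow_zero]
          · have : k' + 1 = k := by rw [hk'def]; simp [hk0]; omega
            rw [this]
        have h4 : ⇑w '' C' = ⇑w '' ((⇑(w ^ k')) '' B) := by rw [hkeq, h3]
        exact Set.image_injective.mpr (Equiv.injective _) h4
      rw [hxp, hval0 (w p) (hnotorb _ hwC' hno2 _ hwpC'), mul_zero]
  -- sum zero
  have hsum : ∑ p, x p = 0 := by
    simp only [hxdef]
    rw [Finset.sum_comm]
    have hterm : ∀ k ∈ Finset.range d₀,
        (∑ p : Fin n, Set.indicator ((⇑(w ^ k)) '' B) (fun _ => η ^ k) p)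
          = ((Finset.univ.filter (· ∈ B)).card : ℂ) * η ^ k := by
      intro k hk
      have h1 : (∑ p : Fin n, Set.indicator ((⇑(w ^ k)) '' B) (fun _ => η ^ k) p)
          = ∑ p ∈ Finset.univ.filter (· ∈ (⇑(w ^ k)) '' B), η ^ k := by
        rw [Finset.sum_filter]
        apply Finset.sum_congr rfl
        intro p _
        rw [Set.indicator_apply]
      have h2 : Finset.univ.filter (· ∈ (⇑(w ^ k)) '' B)
          = (Finset.univ.filter (· ∈ B)).image ⇑(w ^ k) := by
        ext p
        simp only [Finset.mem_filter, Finset.mem_univ, true_and, Finset.mem_image,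
          Set.mem_image]
      rw [h1, h2, Finset.sum_const, Finset.card_image_of_injective _ (Equiv.injective _),
        nsmul_eq_mul]
    rw [Finset.sum_congr rfl hterm, ← Finset.mul_sum, hηprim.geom_sum_eq_zero (by omega),
      mul_zero]
  refine ⟨x, mem_S_iff.mpr ⟨hsum, heig, hconst⟩, ?_, ?_⟩
  · have : i ∈ (⇑(w ^ 0)) '' B := by simpa using hiB
    rw [hval 0 (by omega) i this, pow_zero]
  · by_cases hcase : ∃ k < d₀, C = (⇑(w ^ k)) '' B
    · obtain ⟨k, hk, hCk⟩ := hcase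
      have hk0 : k ≠ 0 := by
        rintro rfl
        apply hCB
        simpa using hCk
      rw [hCk] at hjC
      rw [hval k hk j hjC]
      exact hηprim.pow_ne_one_of_pos_of_lt (by omega) hk
    · rw [hval0 j (hnotorb C hC hcase j hjC)]
      norm_num

end EigenAux

open EigenAux in
/-- for a `w`-stable partition `λ` (with `w` a product of `a = ⌊n/d₀⌋`
disjoint `d₀`-cycles and `ζ` a primitive `d₀`-th root of unity), the condition
`(𝒱(w,ζ) ∩ Γ_λ^⊥)^⊥ ∩ Γ = Γ_λ` is equivalent to: `w` permutes the blocks of `λ` with at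
most one fixed block, all other orbits of blocks having length `d₀`. -/
theorem eigenspace_condition_iff_orbit_condition
    (n d₀ : ℕ) (hn : 1 ≤ n) (hd₀ : 1 ≤ d₀) (a : ℕ) (ha : a = n / d₀)
    (w : Equiv.Perm (Fin n)) (hw : w.cycleType = Multiset.replicate a d₀)
    (ζ : ℂ) (hζ : IsPrimitiveRoot ζ d₀)
    (P : Set (Set (Fin n))) (hP : IsWStablePartition w P) :
    (perp (eigSpace w ζ ∩ perp (rootsOfPartitionC P)) ∩ rootSetC n = rootsOfPartitionC P)
      ↔
    (({B ∈ P | (⇑w) '' B = B}).Subsingleton ∧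
      ∀ B ∈ P, (⇑w) '' B ≠ B → (blockOrbit w B).ncard = d₀) := by
  classical
  have hd2 : 2 ≤ d₀ := by
    rcases Nat.lt_or_ge d₀ 2 with h | h
    · exfalso
      have hd1 : d₀ = 1 := by omega
      subst hd1
      have han : a = n := by simpa using ha
      have h1 : (1 : ℕ) ∈ w.cycleType := by
        rw [hw, han]
        exact Multiset.mem_replicate.mpr ⟨by omega, rfl⟩
      have := Equiv.Perm.two_le_of_mem_cycleType h1
      omega
    · exact h
  have hord : w ^ d₀ = 1 := by
    rw [← orderOf_dvd_iff_pow_eq_one, ← Equiv.Perm.lcm_cycleType, hw]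
    exact Multiset.lcm_dvd.mpr fun x hx => (Multiset.eq_of_mem_replicate hx) ▸ dvd_refl d₀
  constructor
  · -- (i) → (ii)
    intro hEq
    by_contra hcon
    have key : ∀ B C : Set (Fin n), B ∈ P → C ∈ P → B ≠ C →
        (∃ m, 1 ≤ m ∧ m < d₀ ∧ (⇑(w ^ m)) '' B = B) →
        (∃ m, 1 ≤ m ∧ m < d₀ ∧ (⇑(w ^ m)) '' C = C) → False := by
      rintro B C hB hC hBC ⟨m1, hm11, hm12, hBm⟩ ⟨m2, hm21, hm22, hCm⟩
      obtain ⟨i, hi⟩ := hP.1.1 B hB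
      obtain ⟨j, hj⟩ := hP.1.1 C hC
      have hij : i ≠ j := by
        rintro rfl
        exact hBC (block_eq hP.1 hB hC hi hj)
      have hroot : stdVecC n i - stdVecC n j
          ∈ perp (eigSpace w ζ ∩ perp (rootsOfPartitionC P)) ∩ rootSetC n := by
        constructor
        · intro x hx
          rw [stdInner_root_left,
            vanish hP.1 hζ hx hB hm11 hm12 hBm hi,
            vanish hP.1 hζ hx hC hm21 hm22 hCm hj, sub_zero]
        · exact ⟨i, j, hij, rfl⟩
      rw [hEq] at hroot
      obtain ⟨i', j', hij', ⟨D, hD, hi'D, hj'D⟩, heq⟩ := hroot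
      obtain ⟨hik, hjl⟩ := root_eq hij hij' heq
      subst hik; subst hjl
      exact hBC ((block_eq hP.1 hB hD hi hi'D).trans (block_eq hP.1 hD hC hj'D hj))
    by_cases h1 : ({B ∈ P | (⇑w) '' B = B}).Subsingleton
    · have h2 : ∃ B ∈ P, (⇑w) '' B ≠ B ∧ (blockOrbit w B).ncard ≠ d₀ := by
        by_contra h2
        push_neg at h2
        exact hcon ⟨h1, fun B hB hfix => h2 B hB hfix⟩
      obtain ⟨B, hB, hwB, hcard⟩ := h2
      obtain ⟨m, hm1, hm2, hBm⟩ := exists_short (by omega) hord hcard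
      have hCm : (⇑(w ^ m)) '' ((⇑w) '' B) = (⇑w) '' B := by
        have hcomm : ⇑(w ^ m) ∘ ⇑w = ⇑w ∘ ⇑(w ^ m) := by
          rw [← Equiv.Perm.coe_mul, ← Equiv.Perm.coe_mul, ← pow_succ, ← pow_succ']
        rw [← Set.image_comp, hcomm, Set.image_comp, hBm]
      exact key B ((⇑w) '' B) hB (hP.2 B hB) (Ne.symm hwB)
        ⟨m, hm1, hm2, hBm⟩ ⟨m, hm1, hm2, hCm⟩
    · rw [Set.not_subsingleton_iff] at h1
      obtain ⟨B, hBmem, C, hCmem, hBC⟩ := h1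
      obtain ⟨hBP, hBfix⟩ := hBmem
      obtain ⟨hCP, hCfix⟩ := hCmem
      exact key B C hBP hCP hBC
        ⟨1, le_refl 1, by omega, by simpa using hBfix⟩
        ⟨1, le_refl 1, by omega, by simpa using hCfix⟩
  · -- (ii) → (i)
    rintro ⟨hsub, horb⟩
    apply Set.Subset.antisymm
    · rintro y ⟨hperp, i, j, hij, rfl⟩
      obtain ⟨Bi, hBi, hiBi⟩ := exists_block hP.1 i
      obtain ⟨Bj, hBj, hjBj⟩ := exists_block hP.1 j
      by_cases hBij : Bi = Bj
      · exact ⟨i, j, hij, ⟨Bi, hBi, hiBi, hBij ▸ hjBj⟩, rfl⟩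
      · exfalso
        have hx : ∃ x ∈ eigSpace w ζ ∩ perp (rootsOfPartitionC P), x i ≠ x j := by
          by_cases hfixi : (⇑w) '' Bi = Bi
          · have hfixj : (⇑w) '' Bj ≠ Bj := fun hf =>
              hBij (hsub ⟨hBi, hfixi⟩ ⟨hBj, hf⟩)
            have hinj := injOn_of_ncard (by omega) hord (horb Bj hBj hfixj)
            obtain ⟨x, hxS, hx1, hx2⟩ := construction hP hζ hd2 hord hBj hinj hjBj
              hBi hiBi hBij
            exact ⟨x, hxS, fun h => hx2 (h ▸ hx1)⟩
          · have hinj := injOn_of_ncard (by omega) hord (horb Bi hBi hfixi)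
            obtain ⟨x, hxS, hx1, hx2⟩ := construction hP hζ hd2 hord hBi hinj hiBi
              hBj hjBj (Ne.symm hBij)
            exact ⟨x, hxS, fun h => hx2 (h.symm ▸ hx1)⟩
        obtain ⟨x, hxS, hne⟩ := hx
        have h := hperp x hxS
        rw [stdInner_root_left] at h
        exact hne (sub_eq_zero.mp h)
    · rintro y ⟨i, j, hij, ⟨B, hB, hiB, hjB⟩, rfl⟩
      constructor
      · intro x hx
        obtain ⟨-, -, hconst⟩ := mem_S_iff.mp hx
        rw [stdInner_root_left, hconst B hB i hiB j hjB, sub_self]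
      · exact ⟨i, j, hij, rfl⟩
end
end
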